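/- A circle in the plane contains no non-trivial self-affine set: if C ⊆ ℝ² is a circle (the set of points at a fixed positive distance r from a center point) and E ⊆ C is a self-affine set, then E is a singleton. -/

import Mathlib

open Set

/-- `f : ℝⁿ → ℝⁿ` is an invertible, strictly contractive affine map
(its linear part is bijective and has operator norm `< 1`). -/
def IsAffineContraction {n : ℕ}
    (f : EuclideanSpace ℝ (Fin n) → EuclideanSpace ℝ (Fin n)) : Prop :=
  ∃ (T : EuclideanSpace ℝ (Fin n) →L[ℝ] EuclideanSpace ℝ (Fin n))
    (b : EuclideanSpace ℝ (Fin n)),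
    Function.Bijective T ∧ ‖T‖ < 1 ∧ ∀ x, f x = T x + b

/-- `E ⊆ ℝⁿ` is self-affine: it is nonempty, compact and is the attractor of an
affine iterated function system. -/
def IsSelfAffine {n : ℕ} (E : Set (EuclideanSpace ℝ (Fin n))) : Prop :=
  E.Nonempty ∧ IsCompact E ∧
    ∃ (ℓ : ℕ) (f : Fin ℓ → (EuclideanSpace ℝ (Fin n) → EuclideanSpace ℝ (Fin n))),
      (∀ i, IsAffineContraction (f i)) ∧ E = ⋃ i, f i '' E

namespace CircleSelfAffineAux

open Real
open scoped RealInnerProductSpace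

noncomputable def ee0 : EuclideanSpace ℝ (Fin 2) := EuclideanSpace.single 0 1
noncomputable def ee1 : EuclideanSpace ℝ (Fin 2) := EuclideanSpace.single 1 1

lemma decomp (v : EuclideanSpace ℝ (Fin 2)) : v = v 0 • ee0 + v 1 • ee1 := by
  ext i
  fin_cases i <;> simp [ee0, ee1, EuclideanSpace.single_apply]

lemma normsq (v : EuclideanSpace ℝ (Fin 2)) : ‖v‖ ^ 2 = v 0 ^ 2 + v 1 ^ 2 := by
  rw [EuclideanSpace.norm_eq, Real.sq_sqrt (by positivity)]
  simp [Fin.sum_univ_two]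

lemma norm_ee0 : ‖ee0‖ = 1 := by simp [ee0]

lemma cos_anal (θ : ℝ) : AnalyticAt ℝ Real.cos θ := by
  have h1 : AnalyticAt ℂ Complex.cos (θ : ℂ) := Complex.differentiable_cos.analyticAt _
  have h3 : AnalyticAt ℝ (fun t : ℝ => Complex.cos (Complex.ofRealCLM t)) θ :=
    h1.restrictScalars.comp (Complex.ofRealCLM.analyticAt θ)
  have h4 : AnalyticAt ℝ (fun t : ℝ => Complex.reCLM (Complex.cos (Complex.ofRealCLM t))) θ :=
    (Complex.reCLM.analyticAt _).comp h3
  have : Real.cos = fun t : ℝ => Complex.reCLM (Complex.cos (Complex.ofRealCLM t)) := by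
    funext t; simp [Complex.cos_ofReal_re]
  rw [this]; exact h4

lemma sin_anal (θ : ℝ) : AnalyticAt ℝ Real.sin θ := by
  have h1 : AnalyticAt ℂ Complex.sin (θ : ℂ) := Complex.differentiable_sin.analyticAt _
  have h3 : AnalyticAt ℝ (fun t : ℝ => Complex.sin (Complex.ofRealCLM t)) θ :=
    h1.restrictScalars.comp (Complex.ofRealCLM.analyticAt θ)
  have h4 : AnalyticAt ℝ (fun t : ℝ => Complex.reCLM (Complex.sin (Complex.ofRealCLM t))) θ :=
    (Complex.reCLM.analyticAt _).comp h3
  have : Real.sin = fun t : ℝ => Complex.reCLM (Complex.sin (Complex.ofRealCLM t)) := by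
    funext t; simp [Complex.sin_ofReal_re]
  rw [this]; exact h4

lemma exists_cos_sin (a b : ℝ) (h : a ^ 2 + b ^ 2 = 1) :
    ∃ θ ∈ Icc (-π) π, Real.cos θ = a ∧ Real.sin θ = b := by
  have hw : ‖(⟨a, b⟩ : ℂ)‖ = 1 := by
    rw [Complex.norm_def, Complex.normSq_mk]
    rw [show a * a + b * b = 1 by nlinarith]
    exact Real.sqrt_one
  have hne : (⟨a, b⟩ : ℂ) ≠ 0 := by
    intro h0; rw [h0] at hw; simp at hw
  refine ⟨Complex.arg ⟨a, b⟩, Ioc_subset_Icc_self (Complex.arg_mem_Ioc _), ?_, ?_⟩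
  · rw [Complex.cos_arg hne, hw]; simp
  · rw [Complex.sin_arg, hw]; simp

lemma norm_sq_expand (s t : ℝ) (a b w : EuclideanSpace ℝ (Fin 2)) :
    ‖s • a + t • b + w‖ ^ 2 = s ^ 2 * ‖a‖ ^ 2 + t ^ 2 * ‖b‖ ^ 2 + ‖w‖ ^ 2
      + 2 * (s * t) * ⟪a, b⟫ + 2 * s * ⟪a, w⟫ + 2 * t * ⟪b, w⟫ := by
  rw [← real_inner_self_eq_norm_sq, ← real_inner_self_eq_norm_sq,
    ← real_inner_self_eq_norm_sq, ← real_inner_self_eq_norm_sq]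
  simp only [inner_add_left, inner_add_right, real_inner_smul_left, real_inner_smul_right]
  rw [real_inner_comm b a, real_inner_comm w a, real_inner_comm w b]
  ring

/-- Parametrization of a point on the circle. -/
lemma sphere_param (z x : EuclideanSpace ℝ (Fin 2)) (r : ℝ) (hr : 0 < r)
    (hx : x ∈ Metric.sphere z r) :
    ∃ θ ∈ Icc (-π) π, x = z + (r * Real.cos θ) • ee0 + (r * Real.sin θ) • ee1 := by
  set v := x - z with hv
  have hnv : ‖v‖ = r := by
    rw [hv]; exact mem_sphere_iff_norm.mp hx
  have hsum : (v 0 / r) ^ 2 + (v 1 / r) ^ 2 = 1 := by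
    have h2 : v 0 ^ 2 + v 1 ^ 2 = r ^ 2 := by rw [← normsq, hnv]
    field_simp
    linarith
  obtain ⟨θ, hθmem, hc, hs⟩ := exists_cos_sin _ _ hsum
  refine ⟨θ, hθmem, ?_⟩
  have h0 : r * Real.cos θ = v 0 := by rw [hc]; field_simp
  have h1 : r * Real.sin θ = v 1 := by rw [hs]; field_simp
  have := decomp v
  rw [h0, h1, add_assoc, ← this, hv]
  abel

end CircleSelfAffineAux

open CircleSelfAffineAux Real
open scoped RealInnerProductSpace

/-- A circle in the plane contains no non-trivial self-affine set:
if `C ⊆ ℝ²` is the set of points at a fixed positive distance `r` from a center `z`,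
and `E ⊆ C` is a self-affine set, then `E` is a singleton. -/
theorem circle_no_nontrivial_selfAffine
    (z : EuclideanSpace ℝ (Fin 2)) (r : ℝ) (hr : 0 < r)
    (E : Set (EuclideanSpace ℝ (Fin 2)))
    (hE : E ⊆ Metric.sphere z r) (hSA : IsSelfAffine E) :
    ∃ x, E = {x} := by
  obtain ⟨⟨x₀, hx₀⟩, hcomp, ℓ, f, hf, hE_eq⟩ := hSA
  by_contra hcon
  push_neg at hcon
  -- E has two distinct points
  obtain ⟨y₀, hy₀, hy₀ne⟩ : ∃ y ∈ E, y ≠ x₀ := by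
    by_contra h
    push_neg at h
    exact hcon x₀ (eq_singleton_iff_unique_mem.2 ⟨hx₀, h⟩)
  -- there is at least one map
  obtain ⟨i⟩ : Nonempty (Fin ℓ) := by
    by_contra h
    have hie : IsEmpty (Fin ℓ) := not_nonempty_iff.mp h
    rw [hE_eq, iUnion_of_empty] at hx₀
    exact hx₀
  obtain ⟨T, bb, hbij, hTn, hfe⟩ := hf i
  have hsub : f i '' E ⊆ E := by
    exact (subset_iUnion (fun j => f j '' E) i).trans hE_eq.ge
  have hinj : Function.Injective (f i) := by
    intro x y hxy
    rw [hfe, hfe] at hxy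
    exact hbij.1 (add_right_cancel hxy)
  -- strict contraction on distances
  have hcontr : ∀ x y : EuclideanSpace ℝ (Fin 2), x ≠ y →
      dist (f i x) (f i y) < dist x y := by
    intro x y hxy
    rw [hfe, hfe, dist_eq_norm]
    have : T x + bb - (T y + bb) = T (x - y) := by
      rw [map_sub]; abel
    rw [this, dist_eq_norm]
    calc ‖T (x - y)‖ ≤ ‖T‖ * ‖x - y‖ := T.le_opNorm _
      _ < 1 * ‖x - y‖ := by
          apply mul_lt_mul_of_pos_right hTn
          rwa [norm_pos_iff, sub_ne_zero]
      _ = ‖x - y‖ := one_mul _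
  rcases Set.finite_or_infinite E with hfin | hinf
  · -- finite case: the maximal distance strictly decreases, contradiction
    have himg : f i '' E = E := by
      apply Set.eq_of_subset_of_ncard_le hsub _ hfin
      rw [Set.ncard_image_of_injective _ hinj]
    have hPfin : (E ×ˢ E).Finite := hfin.prod hfin
    obtain ⟨p, hp, hmax⟩ := Set.exists_max_image (E ×ˢ E) (fun q => dist q.1 q.2) hPfin
      ⟨(x₀, y₀), ⟨hx₀, hy₀⟩⟩
    have hppos : 0 < dist p.1 p.2 := by
      have := hmax (y₀, x₀) ⟨hy₀, hx₀⟩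
      have hd : 0 < dist y₀ x₀ := dist_pos.mpr hy₀ne
      exact lt_of_lt_of_le hd this
    obtain ⟨hp1, hp2⟩ := hp
    obtain ⟨p1', hp1', hfp1⟩ : p.1 ∈ f i '' E := himg.symm ▸ hp1
    obtain ⟨p2', hp2', hfp2⟩ : p.2 ∈ f i '' E := himg.symm ▸ hp2
    have hne : p1' ≠ p2' := by
      intro h
      rw [h, hfp2] at hfp1
      rw [hfp1] at hppos
      simp at hppos
    have h1 : dist p.1 p.2 < dist p1' p2' := by
      rw [← hfp1, ← hfp2]
      exact hcontr _ _ hne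
    have h2 : dist p1' p2' ≤ dist p.1 p.2 := hmax (p1', p2') ⟨hp1', hp2'⟩
    linarith
  · -- infinite case
    set a := T ee0 with ha
    set b' := T ee1 with hb'
    set w := T z + bb - z with hw
    -- choose an angle for each point of the plane
    have hparam : ∀ x : EuclideanSpace ℝ (Fin 2), ∃ θ, θ ∈ Icc (-π) π ∧
        (x ∈ Metric.sphere z r → x = z + (r * Real.cos θ) • ee0 + (r * Real.sin θ) • ee1) := by
      intro x
      by_cases hx : x ∈ Metric.sphere z r
      · obtain ⟨θ, h1, h2⟩ := sphere_param z x r hr hx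
        exact ⟨θ, h1, fun _ => h2⟩
      · exact ⟨0, ⟨by linarith [pi_pos], le_of_lt pi_pos⟩, fun h => absurd h hx⟩
    choose Θ hΘmem hΘeq using hparam
    have hΘinj : Set.InjOn Θ E := by
      intro x hx y hy hxy
      rw [hΘeq x (hE hx), hΘeq y (hE hy), hxy]
    set S := Θ '' E with hS
    have hSinf : S.Infinite := hinf.image hΘinj
    have hSsub : S ⊆ Icc (-π) π := by
      rintro θ ⟨x, _, rfl⟩
      exact hΘmem x
    obtain ⟨θ₀, _, hacc⟩ := hSinf.exists_accPt_of_subset_isCompact isCompact_Icc hSsub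
    -- the analytic function
    set g : ℝ → ℝ := fun θ =>
      ‖(r * Real.cos θ) • a + (r * Real.sin θ) • b' + w‖ ^ 2 - r ^ 2 with hg
    have hgS : ∀ θ ∈ S, g θ = 0 := by
      rintro θ ⟨x, hx, hθ⟩
      have hxeq := hΘeq x (hE hx)
      rw [hθ] at hxeq
      have hfx : f i x ∈ E := hsub ⟨x, hx, rfl⟩
      have hfxs : ‖f i x - z‖ = r := mem_sphere_iff_norm.mp (hE hfx)
      have hveq : f i x - z = (r * Real.cos θ) • a + (r * Real.sin θ) • b' + w := by
        rw [hfe, hxeq]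
        rw [map_add, map_add, map_smul, map_smul]
        simp only [ha, hb', hw]
        abel
      rw [hg]
      simp only
      rw [← hveq, hfxs]
      ring
    have hfreq : ∃ᶠ θ in nhdsWithin θ₀ {θ₀}ᶜ, g θ = 0 := by
      have h1 : ∃ᶠ θ in nhdsWithin θ₀ {θ₀}ᶜ, θ ∈ S := by
        rw [Filter.frequently_mem_iff_neBot]
        exact hacc
      exact h1.mono (fun θ hθ => hgS θ hθ)
    -- g is analytic
    have hgexp : g = fun θ => (r * Real.cos θ) ^ 2 * ‖a‖ ^ 2 + (r * Real.sin θ) ^ 2 * ‖b'‖ ^ 2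
        + ‖w‖ ^ 2 + 2 * ((r * Real.cos θ) * (r * Real.sin θ)) * ⟪a, b'⟫
        + 2 * (r * Real.cos θ) * ⟪a, w⟫ + 2 * (r * Real.sin θ) * ⟪b', w⟫ - r ^ 2 := by
      funext θ
      rw [hg]
      simp only
      rw [norm_sq_expand]
    have hganal : AnalyticOnNhd ℝ g univ := by
      intro θ _
      rw [hgexp]
      have hc : AnalyticAt ℝ (fun θ => r * Real.cos θ) θ := analyticAt_const.mul (cos_anal θ)
      have hs : AnalyticAt ℝ (fun θ => r * Real.sin θ) θ := analyticAt_const.mul (sin_anal θ)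
      exact ((((((hc.pow 2).mul analyticAt_const).add
        ((hs.pow 2).mul analyticAt_const)).add analyticAt_const).add
        ((analyticAt_const.mul (hc.mul hs)).mul analyticAt_const)).add
        ((analyticAt_const.mul hc).mul analyticAt_const)).add
        ((analyticAt_const.mul hs).mul analyticAt_const) |>.sub analyticAt_const
    have hg0 : ∀ θ : ℝ, g θ = 0 := by
      have := hganal.eqOn_zero_of_preconnected_of_frequently_eq_zero isPreconnected_univ
        (mem_univ θ₀) hfreq
      intro θ; exact this (mem_univ θ)
    -- extract the coefficient identities
    have key : ∀ θ : ℝ, (r * Real.cos θ) ^ 2 * ‖a‖ ^ 2 + (r * Real.sin θ) ^ 2 * ‖b'‖ ^ 2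
        + ‖w‖ ^ 2 + 2 * ((r * Real.cos θ) * (r * Real.sin θ)) * ⟪a, b'⟫
        + 2 * (r * Real.cos θ) * ⟪a, w⟫ + 2 * (r * Real.sin θ) * ⟪b', w⟫ - r ^ 2 = 0 := by
      intro θ
      have := hg0 θ
      rw [hgexp] at this
      exact this
    have k0 := key 0
    have kpi := key π
    have khalf := key (π / 2)
    have knhalf := key (-(π / 2))
    rw [Real.cos_zero, Real.sin_zero] at k0
    rw [Real.cos_pi, Real.sin_pi] at kpi
    rw [Real.cos_pi_div_two, Real.sin_pi_div_two] at khalf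
    rw [Real.cos_neg, Real.sin_neg, Real.cos_pi_div_two, Real.sin_pi_div_two] at knhalf
    have hrne : r ≠ 0 := ne_of_gt hr
    have h4r : (4 : ℝ) * r ≠ 0 := by positivity
    have hpa : ⟪a, w⟫ = 0 := by
      have h : 4 * r * ⟪a, w⟫ = 0 := by linear_combination k0 - kpi
      exact (mul_eq_zero.mp h).resolve_left h4r
    have hpb : ⟪b', w⟫ = 0 := by
      have h : 4 * r * ⟪b', w⟫ = 0 := by linear_combination khalf - knhalf
      exact (mul_eq_zero.mp h).resolve_left h4r
    have hsumA : r ^ 2 * ‖a‖ ^ 2 + ‖w‖ ^ 2 = r ^ 2 := by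
      linear_combination (k0 + kpi) / 2
    -- w = 0
    obtain ⟨u, hu⟩ := hbij.2 w
    have hTu : T u = u 0 • a + u 1 • b' := by
      conv_lhs => rw [decomp u]
      rw [map_add, map_smul, map_smul]
    have hiw : ⟪w, w⟫ = 0 := by
      nth_rewrite 1 [← hu]
      rw [hTu, inner_add_left, real_inner_smul_left, real_inner_smul_left, hpa, hpb]
      ring
    have hww : ‖w‖ ^ 2 = 0 := by
      rw [← real_inner_self_eq_norm_sq]; exact hiw
    -- ‖a‖ = 1
    have hna : ‖a‖ ^ 2 = 1 := by
      have hr2 : (r : ℝ) ^ 2 ≠ 0 := pow_ne_zero 2 hrne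
      apply mul_left_cancel₀ hr2
      rw [mul_one]
      linarith
    have hna1 : ‖a‖ = 1 := by nlinarith [norm_nonneg a]
    -- contradiction with ‖T‖ < 1
    have hle : ‖a‖ ≤ ‖T‖ := by
      have := T.le_opNorm ee0
      rwa [norm_ee0, mul_one] at this
    linarith
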